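/- The n-th moment of a Poisson random variable with parameter x is given by the sum over compositions: E[X^n] = Σ_{k=1}^{n} (n!/k!) Σ_{(α₁,...,α_k) ∈ ℕ^k, Σα_i = n} Π_{j=1}^{k} x/α_j! (each α_j ≥ 1). -/

import Mathlib

open ProbabilityTheory Real

namespace PoissonMomentAux

/-! Auxiliary material: Stirling numbers of the second kind, the expansion of powers
in falling factorials, composition sums, and Poisson-type series computations. -/

/-- Stirling numbers of the second kind. -/
def St : ℕ → ℕ → ℕ
  | 0, 0 => 1
  | 0, _+1 => 0
  | _+1, 0 => 0
  | n+1, k+1 => (k+1) * St n (k+1) + St n k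

@[simp] lemma St_zero_zero : St 0 0 = 1 := rfl
@[simp] lemma St_zero_succ (k : ℕ) : St 0 (k+1) = 0 := rfl
@[simp] lemma St_succ_zero (n : ℕ) : St (n+1) 0 = 0 := rfl
lemma St_succ_succ (n k : ℕ) : St (n+1) (k+1) = (k+1) * St n (k+1) + St n k := rfl

lemma St_eq_zero_of_lt : ∀ (n : ℕ) {k : ℕ}, n < k → St n k = 0
  | 0, _+1, _ => rfl
  | n+1, k+1, h => by
    rw [St_succ_succ, St_eq_zero_of_lt n (by omega), St_eq_zero_of_lt n (by omega)]
    simp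

/-- Key convolution identity for Stirling numbers. -/
lemma KI : ∀ (n k : ℕ),
    ∑ a ∈ Finset.range (n+1), n.choose a * St (n-a) k = St (n+1) (k+1)
  | 0, k => by simp [St_succ_succ]
  | n+1, k => by
    have hT : ∑ b ∈ Finset.range (n+2), n.choose b * St (n+1-b) k
        = k * St (n+1) (k+1) + St (n+1) k := by
      rw [Finset.sum_range_succ, Nat.choose_succ_self, zero_mul, add_zero]
      have hcongr : ∀ b ∈ Finset.range (n+1), n.choose b * St (n+1-b) k
          = n.choose b * St ((n-b)+1) k := by
        intro b hb
        rw [Finset.mem_range] at hb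
        congr 2
        omega
      rw [Finset.sum_congr rfl hcongr]
      cases k with
      | zero => simp
      | succ k' =>
        calc ∑ b ∈ Finset.range (n+1), n.choose b * St ((n-b)+1) (k'+1)
            = ∑ b ∈ Finset.range (n+1),
                ((k'+1) * (n.choose b * St (n-b) (k'+1)) + n.choose b * St (n-b) k') := by
              refine Finset.sum_congr rfl fun b _ => ?_
              rw [St_succ_succ]; ring
          _ = (k'+1) * ∑ b ∈ Finset.range (n+1), n.choose b * St (n-b) (k'+1)
              + ∑ b ∈ Finset.range (n+1), n.choose b * St (n-b) k' := by
              rw [Finset.sum_add_distrib, Finset.mul_sum]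
          _ = (k'+1) * St (n+1) (k'+2) + St (n+1) (k'+1) := by rw [KI n (k'+1), KI n k']
    rw [Finset.sum_range_succ' _ (n+1)]
    simp only [Nat.succ_sub_succ, Nat.sub_zero, Nat.choose_zero_right, one_mul,
      Nat.choose_succ_succ, add_mul]
    rw [Finset.sum_add_distrib, KI n k]
    have hS2 : ∑ i ∈ Finset.range (n+1), n.choose (i+1) * St (n-i) k + St (n+1) k
        = ∑ b ∈ Finset.range (n+2), n.choose b * St (n+1-b) k := by
      rw [Finset.sum_range_succ' _ (n+1)]
      simp [Nat.succ_sub_succ]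
    rw [add_assoc, hS2, hT, St_succ_succ (n+1) k]
    ring

/-- Falling factorial expansion of powers. -/
lemma cast_pow_eq_sum_St (n m : ℕ) :
    (m : ℝ)^n = ∑ k ∈ Finset.range (n+1), (St n k : ℝ) * (m.descFactorial k : ℝ) := by
  induction n with
  | zero => simp
  | succ n ih =>
    have hmul : ∀ k : ℕ, (m : ℝ) * (m.descFactorial k : ℝ)
        = (m.descFactorial (k+1) : ℝ) + k * (m.descFactorial k : ℝ) := by
      intro k
      rcases le_or_gt k m with h | h
      · have h1 : (m.descFactorial (k+1) : ℝ) = ((m - k : ℕ) : ℝ) * (m.descFactorial k : ℝ) := by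
          rw [Nat.descFactorial_succ]; push_cast; ring
        rw [h1, Nat.cast_sub h]; ring
      · rw [Nat.descFactorial_eq_zero_iff_lt.2 h, Nat.descFactorial_eq_zero_iff_lt.2 (by omega)]
        simp
    rw [pow_succ, ih, Finset.sum_mul]
    have hstep : ∀ k ∈ Finset.range (n+1), (St n k : ℝ) * (m.descFactorial k : ℝ) * (m : ℝ)
        = (St n k : ℝ) * (m.descFactorial (k+1) : ℝ)
          + (k : ℝ) * (St n k : ℝ) * (m.descFactorial k : ℝ) := by
      intro k _
      rw [mul_assoc, mul_comm ((m.descFactorial k : ℕ) : ℝ) (m : ℝ), hmul k]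
      ring
    rw [Finset.sum_congr rfl hstep, Finset.sum_add_distrib]
    rw [Finset.sum_range_succ' (fun k => (St (n+1) k : ℝ) * (m.descFactorial k : ℝ)) (n+1)]
    simp only [St_succ_zero, Nat.cast_zero, zero_mul, add_zero]
    have hrw : ∀ k ∈ Finset.range (n+1), (St (n+1) (k+1) : ℝ) * (m.descFactorial (k+1) : ℝ)
        = (St n k : ℝ) * (m.descFactorial (k+1) : ℝ)
          + ((k:ℝ)+1) * (St n (k+1) : ℝ) * (m.descFactorial (k+1) : ℝ) := by
      intro k _
      rw [St_succ_succ]; push_cast; ring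
    rw [Finset.sum_congr rfl hrw, Finset.sum_add_distrib]
    congr 1
    rw [Finset.sum_range_succ' (fun k => (k : ℝ) * (St n k : ℝ) * (m.descFactorial k : ℝ)) n,
      Finset.sum_range_succ (fun x => ((x:ℝ) + 1) * (St n (x+1) : ℝ) * (m.descFactorial (x+1) : ℝ)) n,
      St_eq_zero_of_lt n (show n < n+1 by omega)]
    simp only [Nat.cast_zero, zero_mul, mul_zero, add_zero]
    exact Finset.sum_congr rfl fun i _ => by push_cast; ring

/-- Splitting off the first coordinate of a sum over `antidiagonalTuple`. -/
lemma sum_antidiagonalTuple_succ {M : Type*} [AddCommMonoid M] (k n : ℕ)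
    (F : (Fin (k+1) → ℕ) → M) :
    ∑ α ∈ Finset.Nat.antidiagonalTuple (k+1) n, F α =
      ∑ p ∈ Finset.HasAntidiagonal.antidiagonal n, ∑ β ∈ Finset.Nat.antidiagonalTuple k p.2,
        F (Fin.cons p.1 β) := by
  have hsig := Finset.sum_sigma (s := Finset.HasAntidiagonal.antidiagonal n)
    (t := fun p => Finset.Nat.antidiagonalTuple k p.2)
    (f := fun q => F (Fin.cons q.1.1 q.2))
  rw [← hsig]
  refine Finset.sum_nbij' (i := fun α => ⟨(α 0, ∑ j, α (Fin.succ j)), Fin.tail α⟩)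
    (j := fun p => Fin.cons p.1.1 p.2) ?_ ?_ ?_ ?_ ?_
  · intro α hα
    rw [Finset.Nat.mem_antidiagonalTuple] at hα
    simp only [Finset.mem_sigma, Finset.HasAntidiagonal.mem_antidiagonal, Finset.Nat.mem_antidiagonalTuple]
    constructor
    · rw [← hα, Fin.sum_univ_succ]
    · rfl
  · rintro ⟨⟨a, b⟩, β⟩ hp
    simp only [Finset.mem_sigma, Finset.HasAntidiagonal.mem_antidiagonal,
      Finset.Nat.mem_antidiagonalTuple] at hp
    simp only [Finset.Nat.mem_antidiagonalTuple, Fin.sum_univ_succ, Fin.cons_zero,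
      Fin.cons_succ]
    rw [hp.2, hp.1]
  · intro α _
    simp [Fin.cons_self_tail]
  · rintro ⟨⟨a, b⟩, β⟩ hp
    simp only [Finset.mem_sigma, Finset.HasAntidiagonal.mem_antidiagonal,
      Finset.Nat.mem_antidiagonalTuple] at hp
    have hb : ∑ j, β j = b := hp.2
    simp only [Fin.cons_zero, Fin.cons_succ, Fin.tail_cons, hb]
  · intro α _
    simp [Fin.cons_self_tail]

/-- The weight function for composition sums. -/
noncomputable def g (a : ℕ) : ℝ := if a = 0 then 0 else 1 / a.factorial

/-- Composition sums. -/
noncomputable def D (k n : ℕ) : ℝ :=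
  ∑ α ∈ Finset.Nat.antidiagonalTuple k n, ∏ j, g (α j)

lemma D_zero_zero : D 0 0 = 1 := by
  simp [D, Finset.Nat.antidiagonalTuple_zero_zero]

lemma D_zero_succ (n : ℕ) : D 0 (n+1) = 0 := by
  simp [D, Finset.Nat.antidiagonalTuple_zero_succ]

lemma D_succ (k n : ℕ) : D (k+1) n = ∑ p ∈ Finset.HasAntidiagonal.antidiagonal n, g p.1 * D k p.2 := by
  rw [D, sum_antidiagonalTuple_succ]
  refine Finset.sum_congr rfl fun p _ => ?_
  rw [D, Finset.mul_sum]
  refine Finset.sum_congr rfl fun β _ => ?_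
  rw [Fin.prod_univ_succ, Fin.cons_zero]
  simp only [Fin.cons_succ]

/-- Composition sums are given by Stirling numbers. -/
lemma D_eq (k : ℕ) : ∀ n, (n.factorial : ℝ) * D k n = (k.factorial : ℝ) * (St n k : ℝ) := by
  induction k with
  | zero =>
    intro n
    cases n with
    | zero => simp [D_zero_zero]
    | succ n => simp [D_zero_succ]
  | succ k ih =>
    intro n
    rw [D_succ, Finset.mul_sum, Finset.Nat.sum_antidiagonal_eq_sum_range_succ_mk,
      Finset.sum_range_succ' _ n]
    have h0 : (n.factorial : ℝ) * (g 0 * D k (n - 0)) = 0 := by simp [g]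
    rw [h0, add_zero]
    have hterm : ∀ i ∈ Finset.range n, (n.factorial : ℝ) * (g (i+1) * D k (n-(i+1)))
        = (n.choose (i+1) : ℝ) * ((k.factorial : ℝ) * (St (n-(i+1)) k : ℝ)) := by
      intro i hi
      rw [Finset.mem_range] at hi
      have h1 : i + 1 ≤ n := hi
      have hfac := ih (n-(i+1))
      have hch : ((n.choose (i+1) : ℕ) : ℝ) * (((i+1).factorial : ℕ) : ℝ)
          * (((n-(i+1)).factorial : ℕ) : ℝ) = ((n.factorial : ℕ) : ℝ) := by
        exact_mod_cast congrArg (Nat.cast (R := ℝ)) (Nat.choose_mul_factorial_mul_factorial h1)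
      rw [g, if_neg (by omega)]
      have hf1 : (((i+1).factorial : ℕ) : ℝ) ≠ 0 := by positivity
      field_simp
      linear_combination (-(D k (n-(i+1)))) * hch
        + ((n.choose (i+1) : ℝ) * (((i+1).factorial : ℕ) : ℝ)) * hfac
    rw [Finset.sum_congr rfl hterm]
    have hNat : ∑ i ∈ Finset.range n, n.choose (i+1) * St (n-(i+1)) k + St n k
        = St (n+1) (k+1) := by
      rw [← KI n k, Finset.sum_range_succ' _ n]
      simp
    have hS : ∑ i ∈ Finset.range n, n.choose (i+1) * St (n-(i+1)) k = (k+1) * St n (k+1) := by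
      have h2 := hNat
      rw [St_succ_succ] at h2
      omega
    calc ∑ i ∈ Finset.range n, (n.choose (i+1) : ℝ) * ((k.factorial : ℝ) * (St (n-(i+1)) k : ℝ))
        = (k.factorial : ℝ)
          * ((∑ i ∈ Finset.range n, n.choose (i+1) * St (n-(i+1)) k : ℕ) : ℝ) := by
          push_cast [Finset.mul_sum]
          exact Finset.sum_congr rfl fun i _ => by ring
      _ = ((k+1).factorial : ℝ) * (St n (k+1) : ℝ) := by
          rw [hS]; push_cast [Nat.factorial_succ]; ring

lemma desc_le_pow2 (k m : ℕ) : (m.descFactorial k : ℝ) ≤ ((2:ℝ)^k)^m := by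
  have h1 : m.descFactorial k ≤ (2^k)^m := by
    calc m.descFactorial k ≤ m ^ k := Nat.descFactorial_le_pow m k
      _ ≤ (2^m)^k := Nat.pow_le_pow_left (Nat.le_of_lt m.lt_two_pow_self) k
      _ = (2^k)^m := by rw [← Nat.pow_mul, ← Nat.pow_mul, Nat.mul_comm]
  calc (m.descFactorial k : ℝ) ≤ (((2^k)^m : ℕ) : ℝ) := by exact_mod_cast h1
    _ = ((2:ℝ)^k)^m := by push_cast; ring

lemma summable_desc (y : ℝ) (hy : 0 ≤ y) (k : ℕ) :
    Summable fun m : ℕ => (m.descFactorial k : ℝ) * y^m / m.factorial := by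
  refine Summable.of_nonneg_of_le (fun m => by positivity) (fun m => ?_)
    (Real.summable_pow_div_factorial ((2:ℝ)^k * y))
  rw [mul_pow]
  gcongr
  exact desc_le_pow2 k m

lemma exp_eq_tsum (y : ℝ) : Real.exp y = ∑' m : ℕ, y^m / m.factorial := by
  rw [Real.exp_eq_exp_ℝ, NormedSpace.exp_eq_tsum_div]

lemma tsum_desc (y : ℝ) (hy : 0 ≤ y) (k : ℕ) :
    ∑' m : ℕ, (m.descFactorial k : ℝ) * y^m / m.factorial = y^k * Real.exp y := by
  have hs := summable_desc y hy k
  rw [← Summable.sum_add_tsum_nat_add k hs]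
  have h1 : ∑ i ∈ Finset.range k, (i.descFactorial k : ℝ) * y^i / i.factorial = 0 := by
    refine Finset.sum_eq_zero fun i hi => ?_
    rw [Finset.mem_range] at hi
    rw [Nat.descFactorial_eq_zero_iff_lt.2 hi]
    simp
  rw [h1, zero_add]
  have h2 : ∀ m : ℕ, ((m+k).descFactorial k : ℝ) * y^(m+k) / (m+k).factorial
      = y^k * (y^m / m.factorial) := by
    intro m
    have hkey : ((m).factorial : ℝ) * ((m+k).descFactorial k : ℝ) = ((m+k).factorial : ℝ) := by
      have := Nat.factorial_mul_descFactorial (n := m+k) (k := k) (Nat.le_add_left k m)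
      rw [Nat.add_sub_cancel] at this
      exact_mod_cast congrArg (Nat.cast (R := ℝ)) this
    have hf1 : ((m+k).factorial : ℝ) ≠ 0 := by positivity
    have hf2 : ((m).factorial : ℝ) ≠ 0 := by positivity
    rw [pow_add]
    field_simp
    linear_combination (y^m * y^k) * hkey
  rw [tsum_congr h2, tsum_mul_left, ← exp_eq_tsum]

/-- The filtered composition sum in the target statement, in terms of `D`. -/
lemma filter_sum (y : ℝ) (k n : ℕ) :
    ∑ α ∈ (Finset.Nat.antidiagonalTuple k n).filter (fun α => ∀ j, 1 ≤ α j),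
      ∏ j : Fin k, y / ((α j).factorial : ℝ) = y^k * D k n := by
  rw [Finset.sum_filter, D, Finset.mul_sum]
  refine Finset.sum_congr rfl fun α _ => ?_
  by_cases h : ∀ j, 1 ≤ α j
  · rw [if_pos h]
    have hprod : y^k * ∏ j, g (α j) = ∏ j : Fin k, (y * g (α j)) := by
      rw [Finset.prod_mul_distrib, Finset.prod_const, Finset.card_univ, Fintype.card_fin]
    rw [hprod]
    refine Finset.prod_congr rfl fun j _ => ?_
    rw [g, if_neg (by have := h j; omega)]
    ring
  · rw [if_neg h]
    push_neg at h
    obtain ⟨j, hj⟩ := h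
    have hzero : g (α j) = 0 := by rw [g, if_pos (by omega)]
    rw [Finset.prod_eq_zero (Finset.mem_univ j) hzero, mul_zero]

end PoissonMomentAux

/-- Combinatorial formula for Poisson moments: for `X ~ Poisson(x)` and `n ≥ 1`,
`E[Xⁿ] = Σ_{k=1}^n (n!/k!) Σ_{α ∈ Λₙᵏ} Π_{j=1}^k x/αⱼ!`, where
`Λₙᵏ = {(α₁,…,α_k) ∈ (ℕ≥1)^k : α₁+⋯+α_k = n}`. -/
theorem poisson_moment_formula (x : NNReal) (hx : 0 < x) (n : ℕ) (hn : 1 ≤ n) :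
    (∑' k : ℕ, (k : ℝ) ^ n * poissonPMFReal x k) =
      ∑ k ∈ Finset.Icc 1 n, ((n.factorial : ℝ) / (k.factorial : ℝ)) *
        ∑ α ∈ (Finset.Nat.antidiagonalTuple k n).filter (fun α => ∀ j, 1 ≤ α j),
          ∏ j : Fin k, (x : ℝ) / ((α j).factorial : ℝ) := by
  classical
  open PoissonMomentAux in
  set y : ℝ := (x : ℝ) with hy_def
  have hy : (0:ℝ) ≤ y := x.coe_nonneg
  have hL : (∑' m : ℕ, (m : ℝ) ^ n * poissonPMFReal x m)
      = ∑ k ∈ Finset.range (n+1), (St n k : ℝ) * y^k := by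
    have h1 : ∀ m : ℕ, (m : ℝ)^n * poissonPMFReal x m
        = Real.exp (-y) * ((m:ℝ)^n * y^m / m.factorial) := by
      intro m; rw [poissonPMFReal]; ring
    rw [tsum_congr h1, tsum_mul_left]
    have h2 : ∀ m : ℕ, (m:ℝ)^n * y^m / m.factorial
        = ∑ k ∈ Finset.range (n+1),
            (St n k : ℝ) * ((m.descFactorial k : ℝ) * y^m / m.factorial) := by
      intro m
      rw [cast_pow_eq_sum_St n m, Finset.sum_mul, Finset.sum_div]
      exact Finset.sum_congr rfl fun k _ => by ring
    rw [tsum_congr h2,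
      Summable.tsum_finsetSum (fun k _ => (summable_desc y hy k).mul_left ((St n k : ℝ)))]
    have h3 : ∀ k ∈ Finset.range (n+1),
        (∑' m : ℕ, (St n k : ℝ) * ((m.descFactorial k : ℝ) * y^m / m.factorial))
          = Real.exp y * ((St n k : ℝ) * y^k) := by
      intro k _
      rw [tsum_mul_left, tsum_desc y hy k]
      ring
    rw [Finset.sum_congr rfl h3, ← Finset.mul_sum, ← mul_assoc, ← Real.exp_add,
      neg_add_cancel, Real.exp_zero, one_mul]
  rw [hL]
  have hterm : ∀ k ∈ Finset.Icc 1 n, ((n.factorial : ℝ) / (k.factorial : ℝ)) *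
      (∑ α ∈ (Finset.Nat.antidiagonalTuple k n).filter (fun α => ∀ j, 1 ≤ α j),
        ∏ j : Fin k, y / ((α j).factorial : ℝ)) = (St n k : ℝ) * y^k := by
    intro k _
    rw [filter_sum y k n]
    have hD := D_eq k n
    have hf1 : ((n.factorial : ℕ) : ℝ) ≠ 0 := by positivity
    have hf2 : ((k.factorial : ℕ) : ℝ) ≠ 0 := by positivity
    field_simp
    linear_combination (y^k) * hD
  rw [Finset.sum_congr rfl hterm]
  have hins : Finset.range (n+1) = insert 0 (Finset.Icc 1 n) := by
    ext a
    simp only [Finset.mem_range, Finset.mem_insert, Finset.mem_Icc]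
    omega
  rw [hins, Finset.sum_insert (by simp)]
  obtain ⟨m, rfl⟩ : ∃ m, n = m + 1 := ⟨n - 1, by omega⟩
  simp
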